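/- Let ω be a circle in the Euclidean plane with center O, let A and B be distinct points on ω, and let M be the midpoint of the chord AB. Let CD and EF be two other chords of ω passing through M (so C, D, E, F lie on ω, M lies on the line CD and on the line EF), with C and F lying on opposite sides of the line AB. If G is the intersection point of line CF with line AB and H is the intersection point of line DE with line AB, then M is the midpoint of the segment GH. -/

import Mathlib

open scoped InnerProductSpace

set_option maxHeartbeats 1000000


private lemma key_alg (k c xC yC xD yD xE yE xF yF xG xH : ℝ)
    (hc : 0 < c)
    (eC : xC^2 + yC^2 - 2*k*yC = c) (eD : xD^2 + yD^2 - 2*k*yD = c)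
    (eE : xE^2 + yE^2 - 2*k*yE = c) (eF : xF^2 + yF^2 - 2*k*yF = c)
    (col1 : xC*yD = xD*yC) (col2 : xE*yF = xF*yE)
    (hCD : ¬(xC = xD ∧ yC = yD)) (hEF : ¬(xE = xF ∧ yE = yF))
    (hopp : yC * yF < 0)
    (hG : xG * (yF - yC) = xC*yF - xF*yC)
    (hH : xH * (yE - yD) = xD*yE - xE*yD) :
    xG + xH = 0 := by
  have hyC : yC ≠ 0 := by
    intro h; rw [h, zero_mul] at hopp; exact lt_irrefl 0 hopp
  have hyF : yF ≠ 0 := by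
    intro h; rw [h, mul_zero] at hopp; exact lt_irrefl 0 hopp
  have hyE : yE ≠ 0 := by
    intro h
    have hx : xE * yF = 0 := by rw [col2, h]; ring
    have hxE : xE = 0 := (mul_eq_zero.1 hx).resolve_right hyF
    rw [h, hxE] at eE; nlinarith
  set l := yD / yC with hl
  set m := yF / yE with hm
  have hyD' : yD = l * yC := by rw [hl]; field_simp
  have hxD' : xD = l * xC := by
    rw [hl, div_mul_eq_mul_div, eq_div_iff hyC]
    linear_combination -col1
  have hyF' : yF = m * yE := by rw [hm]; field_simp
  have hxF' : xF = m * xE := by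
    rw [hm, div_mul_eq_mul_div, eq_div_iff hyE]
    linear_combination -col2
  have pCpos : 0 < xC^2 + yC^2 := by positivity
  have pEpos : 0 < xE^2 + yE^2 := by positivity
  have hl1 : l ≠ 1 := by
    intro h; rw [h, one_mul] at hyD' hxD'; exact hCD ⟨hxD'.symm, hyD'.symm⟩
  have hm1 : m ≠ 1 := by
    intro h; rw [h, one_mul] at hyF' hxF'; exact hEF ⟨hxF'.symm, hyF'.symm⟩
  have hlam : l * (xC^2 + yC^2) = -c := by
    have hfac : (l - 1) * (l * (xC^2 + yC^2) + c) = 0 := by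
      rw [hxD', hyD'] at eD
      linear_combination eD - l * eC
    rcases mul_eq_zero.1 hfac with h | h
    · exact absurd (by linarith : l = 1) hl1
    · linarith
  have hmu : m * (xE^2 + yE^2) = -c := by
    have hfac : (m - 1) * (m * (xE^2 + yE^2) + c) = 0 := by
      rw [hxF', hyF'] at eF
      linear_combination eF - m * eE
    rcases mul_eq_zero.1 hfac with h | h
    · exact absurd (by linarith : m = 1) hm1
    · linarith
  have hlneg : l < 0 := by
    by_contra hcon
    push_neg at hcon
    have : 0 ≤ l * (xC^2 + yC^2) := mul_nonneg hcon pCpos.le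
    linarith
  have hmneg : m < 0 := by
    by_contra hcon
    push_neg at hcon
    have : 0 ≤ m * (xE^2 + yE^2) := mul_nonneg hcon pEpos.le
    linarith
  have hCE : 0 < yC * yE := by
    have h1 : m * (yC * yE) < 0 := by rw [hyF'] at hopp; linarith [hopp, (by ring : yC * (m * yE) = m * (yC * yE))]
    by_contra hcon
    push_neg at hcon
    rcases lt_or_eq_of_le hcon with h | h
    · have := mul_pos_of_neg_of_neg hmneg h
      linarith
    · rw [h, mul_zero] at h1
      exact lt_irrefl 0 h1
  have hDE : yD * yE < 0 := by
    have h1 : yD * yE = l * (yC * yE) := by rw [hyD']; ring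
    have : l * (yC * yE) < 0 := mul_neg_of_neg_of_pos hlneg hCE
    linarith
  have hFC : yF - yC ≠ 0 := by
    intro h
    have : yF = yC := by linarith
    rw [this] at hopp
    nlinarith [sq_nonneg yC]
  have hED : yE - yD ≠ 0 := by
    intro h
    have : yE = yD := by linarith
    rw [this] at hDE
    nlinarith [sq_nonneg yD]
  have hl2 : (1 + l) * (xC^2 + yC^2) = 2*k*yC := by linear_combination hlam + eC
  have hm2 : (1 + m) * (xE^2 + yE^2) = 2*k*yE := by linear_combination hmu + eE
  have hbr0 : (m*yE + l*m*yE - l*m*yC - l*yC) * ((xC^2 + yC^2) * (xE^2 + yE^2)) = 0 := by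
    linear_combination (yE*(1+l)*(xC^2+yC^2))*hmu - (c*yE)*hl2
      - (yC*(1+m)*(xE^2+yE^2))*hlam + (c*yC)*hm2
  have hbr : m*yE + l*m*yE - l*m*yC - l*yC = 0 :=
    (mul_eq_zero.1 hbr0).resolve_right (by positivity)
  have hGv : xG = (xC*yF - xF*yC) / (yF - yC) := by
    rw [eq_div_iff hFC]; exact hG
  have hHv : xH = (xD*yE - xE*yD) / (yE - yD) := by
    rw [eq_div_iff hED]; exact hH
  rw [hGv, hHv, div_add_div _ _ hFC hED, div_eq_zero_iff]
  left
  rw [hxD', hyD', hxF', hyF']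
  linear_combination (xC*yE - xE*yC) * hbr


private lemma dist_sq' (P Q : EuclideanSpace ℝ (Fin 2)) (r : ℝ) (h : dist P Q = r) :
    (P 0 - Q 0)^2 + (P 1 - Q 1)^2 = r^2 := by
  have := congrArg (·^2) h
  simp only [EuclideanSpace.dist_eq, Fin.sum_univ_two] at this
  rw [Real.sq_sqrt (by positivity)] at this
  simpa [Real.dist_eq, sq_abs] using this

private lemma cross_of_collinear' {P Q R : EuclideanSpace ℝ (Fin 2)}
    (h : Collinear ℝ ({P, Q, R} : Set (EuclideanSpace ℝ (Fin 2)))) :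
    (Q 0 - P 0) * (R 1 - P 1) = (Q 1 - P 1) * (R 0 - P 0) := by
  rw [collinear_iff_exists_forall_eq_smul_vadd] at h
  obtain ⟨p₀, v, hv⟩ := h
  obtain ⟨a, ha⟩ := hv P (by simp)
  obtain ⟨b, hb⟩ := hv Q (by simp)
  obtain ⟨c, hc⟩ := hv R (by simp)
  subst ha hb hc
  simp only [vadd_eq_add, PiLp.add_apply, PiLp.smul_apply, smul_eq_mul]
  ring

private lemma midpoint_coord {M A B : EuclideanSpace ℝ (Fin 2)}
    (hM : M = midpoint ℝ A B) (i : Fin 2) : M i = (A i + B i)/2 := by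
  subst hM
  rw [midpoint_eq_smul_add]
  simp [PiLp.smul_apply, PiLp.add_apply]
  ring

private lemma mem_span_y {A B M P : EuclideanSpace ℝ (Fin 2)}
    (hM : M = midpoint ℝ A B)
    (h : P ∈ affineSpan ℝ ({A, B} : Set (EuclideanSpace ℝ (Fin 2)))) :
    (P 1 - M 1) * (B 0 - A 0) - (P 0 - M 0) * (B 1 - A 1) = 0 := by
  have hM0 := midpoint_coord hM 0
  have hM1 := midpoint_coord hM 1
  have h' : (P - A) +ᵥ A ∈ affineSpan ℝ ({A, B} : Set (EuclideanSpace ℝ (Fin 2))) := by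
    rwa [vadd_eq_add, sub_add_cancel]
  obtain ⟨t, ht⟩ := vadd_left_mem_affineSpan_pair.1 h'
  have ht0 := congrArg (fun f => f 0) ht
  have ht1 := congrArg (fun f => f 1) ht
  simp only [PiLp.smul_apply, vsub_eq_sub, PiLp.sub_apply, smul_eq_mul] at ht0 ht1
  rw [hM0, hM1]
  linear_combination (B 1 - A 1)*ht0 - (B 0 - A 0)*ht1

private lemma not_mem_span_y {A B M P : EuclideanSpace ℝ (Fin 2)}
    (hAB : A ≠ B) (hM : M = midpoint ℝ A B)
    (h : P ∉ affineSpan ℝ ({A, B} : Set (EuclideanSpace ℝ (Fin 2)))) :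
    (P 1 - M 1) * (B 0 - A 0) - (P 0 - M 0) * (B 1 - A 1) ≠ 0 := by
  intro hy
  apply h
  have hM0 := midpoint_coord hM 0
  have hM1 := midpoint_coord hM 1
  rw [hM0, hM1] at hy
  have hab : A 0 ≠ B 0 ∨ A 1 ≠ B 1 := by
    by_contra hcon
    push_neg at hcon
    exact hAB (by ext i; fin_cases i <;> simp [hcon.1, hcon.2])
  have hs : 0 < (B 0 - A 0)^2 + (B 1 - A 1)^2 := by
    rcases hab with hne | hne
    · have h' : 0 < (B 0 - A 0)*(B 0 - A 0) := mul_self_pos.2 (sub_ne_zero.2 (Ne.symm hne))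
      nlinarith [sq_nonneg (B 1 - A 1)]
    · have h' : 0 < (B 1 - A 1)*(B 1 - A 1) := mul_self_pos.2 (sub_ne_zero.2 (Ne.symm hne))
      nlinarith [sq_nonneg (B 0 - A 0)]
  have hsne : ((B 0 - A 0)^2 + (B 1 - A 1)^2) ≠ 0 := ne_of_gt hs
  set tt : ℝ := ((P 0 - A 0)*(B 0 - A 0) + (P 1 - A 1)*(B 1 - A 1)) / ((B 0 - A 0)^2 + (B 1 - A 1)^2) with htt
  have e0 : tt * (B 0 - A 0) = P 0 - A 0 := by
    rw [htt, div_mul_eq_mul_div, div_eq_iff hsne]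
    linear_combination (B 1 - A 1)*hy
  have e1 : tt * (B 1 - A 1) = P 1 - A 1 := by
    rw [htt, div_mul_eq_mul_div, div_eq_iff hsne]
    linear_combination (-(B 0 - A 0))*hy
  have h' : (P - A) +ᵥ A ∈ affineSpan ℝ ({A, B} : Set (EuclideanSpace ℝ (Fin 2))) := by
    refine vadd_left_mem_affineSpan_pair.2 ⟨tt, ?_⟩
    ext i
    fin_cases i
    · simp only [PiLp.smul_apply, vsub_eq_sub, PiLp.sub_apply, smul_eq_mul, Fin.zero_eta, Fin.mk_one]; exact e0
    · simp only [PiLp.smul_apply, vsub_eq_sub, PiLp.sub_apply, smul_eq_mul, Fin.zero_eta, Fin.mk_one]; exact e1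
  rwa [vadd_eq_add, sub_add_cancel] at h'

private lemma midpoint_of_coords {G H M : EuclideanSpace ℝ (Fin 2)}
    (h0 : G 0 + H 0 = 2 * M 0) (h1 : G 1 + H 1 = 2 * M 1) :
    M = midpoint ℝ G H := by
  have hm : ∀ i, midpoint ℝ G H i = (G i + H i)/2 := by
    intro i
    rw [midpoint_eq_smul_add]
    simp [PiLp.smul_apply, PiLp.add_apply]
    ring
  ext i
  rw [hm]
  fin_cases i <;> simp <;> linarith

private lemma butterfly_coords
    (a0 a1 b0 b1 c0 c1 d0 d1 e0 e1 f0 f1 g0 g1 h0 h1 o0 o1 r : ℝ)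
    (dA : (a0-o0)^2+(a1-o1)^2 = r^2) (dB : (b0-o0)^2+(b1-o1)^2 = r^2)
    (dC : (c0-o0)^2+(c1-o1)^2 = r^2) (dD : (d0-o0)^2+(d1-o1)^2 = r^2)
    (dE : (e0-o0)^2+(e1-o1)^2 = r^2) (dF : (f0-o0)^2+(f1-o1)^2 = r^2)
    (hab : ¬(a0 = b0 ∧ a1 = b1))
    (colCD : (d0-c0)*((a1+b1)/2-c1) = (d1-c1)*((a0+b0)/2-c0))
    (colEF : (f0-e0)*((a1+b1)/2-e1) = (f1-e1)*((a0+b0)/2-e0))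
    (colCFG : (f0-c0)*(g1-c1) = (f1-c1)*(g0-c0))
    (colABG : (b0-a0)*(g1-a1) = (b1-a1)*(g0-a0))
    (colDEH : (e0-d0)*(h1-d1) = (e1-d1)*(h0-d0))
    (colABH : (b0-a0)*(h1-a1) = (b1-a1)*(h0-a0))
    (hCD : ¬(c0 = d0 ∧ c1 = d1)) (hEF : ¬(e0 = f0 ∧ e1 = f1))
    (hoppy : ((c1 - ((a1+b1)/2))*(b0 - a0) - (c0 - ((a0+b0)/2))*(b1 - a1)) * ((f1 - ((a1+b1)/2))*(b0 - a0) - (f0 - ((a0+b0)/2))*(b1 - a1)) < 0) :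
    g0 + h0 = a0 + b0 ∧ g1 + h1 = a1 + b1 := by
  have hs : 0 < ((b0 - a0)^2 + (b1 - a1)^2) := by
    rcases not_and_or.1 hab with h | h
    · have h' : 0 < (b0 - a0)*(b0 - a0) := mul_self_pos.2 (sub_ne_zero.2 (Ne.symm h))
      nlinarith [sq_nonneg (b1 - a1)]
    · have h' : 0 < (b1 - a1)*(b1 - a1) := mul_self_pos.2 (sub_ne_zero.2 (Ne.symm h))
      nlinarith [sq_nonneg (b0 - a0)]
  have hsne : ((b0 - a0)^2 + (b1 - a1)^2) ≠ 0 := ne_of_gt hs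
  have hchi : (o0 - (a0+b0)/2)*(b0 - a0) + (o1 - (a1+b1)/2)*(b1 - a1) = 0 := by
    linear_combination (1/2 : ℝ)*dA - (1/2 : ℝ)*dB
  have eC : ((c0 - ((a0+b0)/2))*(b0 - a0) + (c1 - ((a1+b1)/2))*(b1 - a1))^2 + ((c1 - ((a1+b1)/2))*(b0 - a0) - (c0 - ((a0+b0)/2))*(b1 - a1))^2 - 2*((o1 - ((a1+b1)/2))*(b0 - a0) - (o0 - ((a0+b0)/2))*(b1 - a1))*((c1 - ((a1+b1)/2))*(b0 - a0) - (c0 - ((a0+b0)/2))*(b1 - a1)) = ((b0 - a0)^2 + (b1 - a1)^2)^2/4 := by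
    linear_combination ((b0 - a0)^2 + (b1 - a1)^2)*dC - ((b0 - a0)^2 + (b1 - a1)^2)*dA + (2*((c0 - ((a0+b0)/2))*(b0 - a0) + (c1 - ((a1+b1)/2))*(b1 - a1)) + ((b0 - a0)^2 + (b1 - a1)^2))*hchi
  have eD : ((d0 - ((a0+b0)/2))*(b0 - a0) + (d1 - ((a1+b1)/2))*(b1 - a1))^2 + ((d1 - ((a1+b1)/2))*(b0 - a0) - (d0 - ((a0+b0)/2))*(b1 - a1))^2 - 2*((o1 - ((a1+b1)/2))*(b0 - a0) - (o0 - ((a0+b0)/2))*(b1 - a1))*((d1 - ((a1+b1)/2))*(b0 - a0) - (d0 - ((a0+b0)/2))*(b1 - a1)) = ((b0 - a0)^2 + (b1 - a1)^2)^2/4 := by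
    linear_combination ((b0 - a0)^2 + (b1 - a1)^2)*dD - ((b0 - a0)^2 + (b1 - a1)^2)*dA + (2*((d0 - ((a0+b0)/2))*(b0 - a0) + (d1 - ((a1+b1)/2))*(b1 - a1)) + ((b0 - a0)^2 + (b1 - a1)^2))*hchi
  have eE : ((e0 - ((a0+b0)/2))*(b0 - a0) + (e1 - ((a1+b1)/2))*(b1 - a1))^2 + ((e1 - ((a1+b1)/2))*(b0 - a0) - (e0 - ((a0+b0)/2))*(b1 - a1))^2 - 2*((o1 - ((a1+b1)/2))*(b0 - a0) - (o0 - ((a0+b0)/2))*(b1 - a1))*((e1 - ((a1+b1)/2))*(b0 - a0) - (e0 - ((a0+b0)/2))*(b1 - a1)) = ((b0 - a0)^2 + (b1 - a1)^2)^2/4 := by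
    linear_combination ((b0 - a0)^2 + (b1 - a1)^2)*dE - ((b0 - a0)^2 + (b1 - a1)^2)*dA + (2*((e0 - ((a0+b0)/2))*(b0 - a0) + (e1 - ((a1+b1)/2))*(b1 - a1)) + ((b0 - a0)^2 + (b1 - a1)^2))*hchi
  have eF : ((f0 - ((a0+b0)/2))*(b0 - a0) + (f1 - ((a1+b1)/2))*(b1 - a1))^2 + ((f1 - ((a1+b1)/2))*(b0 - a0) - (f0 - ((a0+b0)/2))*(b1 - a1))^2 - 2*((o1 - ((a1+b1)/2))*(b0 - a0) - (o0 - ((a0+b0)/2))*(b1 - a1))*((f1 - ((a1+b1)/2))*(b0 - a0) - (f0 - ((a0+b0)/2))*(b1 - a1)) = ((b0 - a0)^2 + (b1 - a1)^2)^2/4 := by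
    linear_combination ((b0 - a0)^2 + (b1 - a1)^2)*dF - ((b0 - a0)^2 + (b1 - a1)^2)*dA + (2*((f0 - ((a0+b0)/2))*(b0 - a0) + (f1 - ((a1+b1)/2))*(b1 - a1)) + ((b0 - a0)^2 + (b1 - a1)^2))*hchi
  have hc : (0:ℝ) < ((b0 - a0)^2 + (b1 - a1)^2)^2/4 := by positivity
  have col1 : ((c0 - ((a0+b0)/2))*(b0 - a0) + (c1 - ((a1+b1)/2))*(b1 - a1))*((d1 - ((a1+b1)/2))*(b0 - a0) - (d0 - ((a0+b0)/2))*(b1 - a1)) = ((d0 - ((a0+b0)/2))*(b0 - a0) + (d1 - ((a1+b1)/2))*(b1 - a1))*((c1 - ((a1+b1)/2))*(b0 - a0) - (c0 - ((a0+b0)/2))*(b1 - a1)) := by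
    linear_combination ((b0 - a0)^2 + (b1 - a1)^2)*colCD
  have col2 : ((e0 - ((a0+b0)/2))*(b0 - a0) + (e1 - ((a1+b1)/2))*(b1 - a1))*((f1 - ((a1+b1)/2))*(b0 - a0) - (f0 - ((a0+b0)/2))*(b1 - a1)) = ((f0 - ((a0+b0)/2))*(b0 - a0) + (f1 - ((a1+b1)/2))*(b1 - a1))*((e1 - ((a1+b1)/2))*(b0 - a0) - (e0 - ((a0+b0)/2))*(b1 - a1)) := by
    linear_combination ((b0 - a0)^2 + (b1 - a1)^2)*colEF
  have hyG : ((g1 - ((a1+b1)/2))*(b0 - a0) - (g0 - ((a0+b0)/2))*(b1 - a1)) = 0 := by linear_combination colABG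
  have hyH : ((h1 - ((a1+b1)/2))*(b0 - a0) - (h0 - ((a0+b0)/2))*(b1 - a1)) = 0 := by linear_combination colABH
  have hG : ((g0 - ((a0+b0)/2))*(b0 - a0) + (g1 - ((a1+b1)/2))*(b1 - a1))*(((f1 - ((a1+b1)/2))*(b0 - a0) - (f0 - ((a0+b0)/2))*(b1 - a1)) - ((c1 - ((a1+b1)/2))*(b0 - a0) - (c0 - ((a0+b0)/2))*(b1 - a1))) = ((c0 - ((a0+b0)/2))*(b0 - a0) + (c1 - ((a1+b1)/2))*(b1 - a1))*((f1 - ((a1+b1)/2))*(b0 - a0) - (f0 - ((a0+b0)/2))*(b1 - a1)) - ((f0 - ((a0+b0)/2))*(b0 - a0) + (f1 - ((a1+b1)/2))*(b1 - a1))*((c1 - ((a1+b1)/2))*(b0 - a0) - (c0 - ((a0+b0)/2))*(b1 - a1)) := by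
    linear_combination (-((b0 - a0)^2 + (b1 - a1)^2))*colCFG + (((f0 - ((a0+b0)/2))*(b0 - a0) + (f1 - ((a1+b1)/2))*(b1 - a1)) - ((c0 - ((a0+b0)/2))*(b0 - a0) + (c1 - ((a1+b1)/2))*(b1 - a1)))*hyG
  have hH : ((h0 - ((a0+b0)/2))*(b0 - a0) + (h1 - ((a1+b1)/2))*(b1 - a1))*(((e1 - ((a1+b1)/2))*(b0 - a0) - (e0 - ((a0+b0)/2))*(b1 - a1)) - ((d1 - ((a1+b1)/2))*(b0 - a0) - (d0 - ((a0+b0)/2))*(b1 - a1))) = ((d0 - ((a0+b0)/2))*(b0 - a0) + (d1 - ((a1+b1)/2))*(b1 - a1))*((e1 - ((a1+b1)/2))*(b0 - a0) - (e0 - ((a0+b0)/2))*(b1 - a1)) - ((e0 - ((a0+b0)/2))*(b0 - a0) + (e1 - ((a1+b1)/2))*(b1 - a1))*((d1 - ((a1+b1)/2))*(b0 - a0) - (d0 - ((a0+b0)/2))*(b1 - a1)) := by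
    linear_combination (-((b0 - a0)^2 + (b1 - a1)^2))*colDEH + (((e0 - ((a0+b0)/2))*(b0 - a0) + (e1 - ((a1+b1)/2))*(b1 - a1)) - ((d0 - ((a0+b0)/2))*(b0 - a0) + (d1 - ((a1+b1)/2))*(b1 - a1)))*hyH
  have frameCD : ¬(((c0 - ((a0+b0)/2))*(b0 - a0) + (c1 - ((a1+b1)/2))*(b1 - a1)) = ((d0 - ((a0+b0)/2))*(b0 - a0) + (d1 - ((a1+b1)/2))*(b1 - a1)) ∧ ((c1 - ((a1+b1)/2))*(b0 - a0) - (c0 - ((a0+b0)/2))*(b1 - a1)) = ((d1 - ((a1+b1)/2))*(b0 - a0) - (d0 - ((a0+b0)/2))*(b1 - a1))) := by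
    rintro ⟨h1, h2⟩
    apply hCD
    constructor
    · have h3 : (c0 - d0)*((b0 - a0)^2 + (b1 - a1)^2) = 0 := by linear_combination (b0 - a0)*h1 - (b1 - a1)*h2
      have := (mul_eq_zero.1 h3).resolve_right hsne
      linarith
    · have h3 : (c1 - d1)*((b0 - a0)^2 + (b1 - a1)^2) = 0 := by linear_combination (b1 - a1)*h1 + (b0 - a0)*h2
      have := (mul_eq_zero.1 h3).resolve_right hsne
      linarith
  have frameEF : ¬(((e0 - ((a0+b0)/2))*(b0 - a0) + (e1 - ((a1+b1)/2))*(b1 - a1)) = ((f0 - ((a0+b0)/2))*(b0 - a0) + (f1 - ((a1+b1)/2))*(b1 - a1)) ∧ ((e1 - ((a1+b1)/2))*(b0 - a0) - (e0 - ((a0+b0)/2))*(b1 - a1)) = ((f1 - ((a1+b1)/2))*(b0 - a0) - (f0 - ((a0+b0)/2))*(b1 - a1))) := by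
    rintro ⟨h1, h2⟩
    apply hEF
    constructor
    · have h3 : (e0 - f0)*((b0 - a0)^2 + (b1 - a1)^2) = 0 := by linear_combination (b0 - a0)*h1 - (b1 - a1)*h2
      have := (mul_eq_zero.1 h3).resolve_right hsne
      linarith
    · have h3 : (e1 - f1)*((b0 - a0)^2 + (b1 - a1)^2) = 0 := by linear_combination (b1 - a1)*h1 + (b0 - a0)*h2
      have := (mul_eq_zero.1 h3).resolve_right hsne
      linarith
  have hsum := key_alg ((o1 - ((a1+b1)/2))*(b0 - a0) - (o0 - ((a0+b0)/2))*(b1 - a1)) (((b0 - a0)^2 + (b1 - a1)^2)^2/4) ((c0 - ((a0+b0)/2))*(b0 - a0) + (c1 - ((a1+b1)/2))*(b1 - a1)) ((c1 - ((a1+b1)/2))*(b0 - a0) - (c0 - ((a0+b0)/2))*(b1 - a1)) ((d0 - ((a0+b0)/2))*(b0 - a0) + (d1 - ((a1+b1)/2))*(b1 - a1)) ((d1 - ((a1+b1)/2))*(b0 - a0) - (d0 - ((a0+b0)/2))*(b1 - a1)) ((e0 - ((a0+b0)/2))*(b0 - a0) + (e1 - ((a1+b1)/2))*(b1 - a1))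 ((e1 - ((a1+b1)/2))*(b0 - a0) - (e0 - ((a0+b0)/2))*(b1 - a1))
    ((f0 - ((a0+b0)/2))*(b0 - a0) + (f1 - ((a1+b1)/2))*(b1 - a1)) ((f1 - ((a1+b1)/2))*(b0 - a0) - (f0 - ((a0+b0)/2))*(b1 - a1)) ((g0 - ((a0+b0)/2))*(b0 - a0) + (g1 - ((a1+b1)/2))*(b1 - a1)) ((h0 - ((a0+b0)/2))*(b0 - a0) + (h1 - ((a1+b1)/2))*(b1 - a1)) hc eC eD eE eF col1 col2 frameCD frameEF hoppy hG hH
  constructor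
  · have h1 : (g0 + h0 - (a0 + b0))*((b0 - a0)^2 + (b1 - a1)^2) = 0 := by
      linear_combination (b0 - a0)*hsum - (b1 - a1)*hyG - (b1 - a1)*hyH
    have := (mul_eq_zero.1 h1).resolve_right hsne
    linarith
  · have h2 : (g1 + h1 - (a1 + b1))*((b0 - a0)^2 + (b1 - a1)^2) = 0 := by
      linear_combination (b1 - a1)*hsum + (b0 - a0)*hyG + (b0 - a0)*hyH
    have := (mul_eq_zero.1 h2).resolve_right hsne
    linarith

/-- **Butterfly Theorem.** Let `M` be the midpoint of a chord `AB` of a circle with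
center `O` and radius `r`, and let `CD` and `EF` be two other chords through `M`,
with `C` and `F` on opposite sides of line `AB`.  If line `CF` meets line `AB` at `G`
and line `DE` meets line `AB` at `H`, then `M` is the midpoint of `GH`. -/
theorem butterfly_theorem
    (O A B C D E F G H M : EuclideanSpace ℝ (Fin 2)) (r : ℝ)
    (hA : dist A O = r) (hB : dist B O = r) (hAB : A ≠ B)
    (hC : dist C O = r) (hD : dist D O = r) (hCD : C ≠ D)
    (hE : dist E O = r) (hF : dist F O = r) (hEF : E ≠ F)
    (hM : M = midpoint ℝ A B)
    (hMCD : Collinear ℝ ({C, D, M} : Set (EuclideanSpace ℝ (Fin 2))))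
    (hMEF : Collinear ℝ ({E, F, M} : Set (EuclideanSpace ℝ (Fin 2))))
    (hopp : (affineSpan ℝ ({A, B} : Set (EuclideanSpace ℝ (Fin 2)))).SOppSide C F)
    (hGCF : Collinear ℝ ({C, F, G} : Set (EuclideanSpace ℝ (Fin 2))))
    (hGAB : Collinear ℝ ({A, B, G} : Set (EuclideanSpace ℝ (Fin 2))))
    (hHDE : Collinear ℝ ({D, E, H} : Set (EuclideanSpace ℝ (Fin 2))))
    (hHAB : Collinear ℝ ({A, B, H} : Set (EuclideanSpace ℝ (Fin 2)))) :
    M = midpoint ℝ G H := by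
  have dA := dist_sq' A O r hA
  have dB := dist_sq' B O r hB
  have dC := dist_sq' C O r hC
  have dD := dist_sq' D O r hD
  have dE := dist_sq' E O r hE
  have dF := dist_sq' F O r hF
  have hM0 := midpoint_coord hM 0
  have hM1 := midpoint_coord hM 1
  have hab : ¬(A 0 = B 0 ∧ A 1 = B 1) := by
    rintro ⟨h1, h2⟩
    exact hAB (by ext i; fin_cases i <;> simpa using by first | exact h1 | exact h2)
  have hCD' : ¬(C 0 = D 0 ∧ C 1 = D 1) := by
    rintro ⟨h1, h2⟩
    exact hCD (by ext i; fin_cases i <;> simpa using by first | exact h1 | exact h2)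
  have hEF' : ¬(E 0 = F 0 ∧ E 1 = F 1) := by
    rintro ⟨h1, h2⟩
    exact hEF (by ext i; fin_cases i <;> simpa using by first | exact h1 | exact h2)
  have colCD := cross_of_collinear' hMCD
  have colEF := cross_of_collinear' hMEF
  have colCFG := cross_of_collinear' hGCF
  have colABG := cross_of_collinear' hGAB
  have colDEH := cross_of_collinear' hHDE
  have colABH := cross_of_collinear' hHAB
  rw [hM0, hM1] at colCD colEF
  -- extract the opposite-side information
  obtain ⟨⟨p₁, hp₁, p₂, hp₂, hray⟩, hCn, hFn⟩ := hopp
  have yCne := not_mem_span_y hAB hM hCn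
  have yFne := not_mem_span_y hAB hM hFn
  have yp₁ := mem_span_y hM hp₁
  have yp₂ := mem_span_y hM hp₂
  have hu : C -ᵥ p₁ ≠ 0 := by
    intro h0
    apply hCn
    have hcp : C = p₁ := by rwa [vsub_eq_sub, sub_eq_zero] at h0
    rwa [hcp]
  have hv : p₂ -ᵥ F ≠ 0 := by
    intro h0
    apply hFn
    have hcp : p₂ = F := by rwa [vsub_eq_sub, sub_eq_zero] at h0
    rwa [← hcp]
  obtain ⟨u, v, hu0, hv0, huv⟩ := hray.exists_pos hu hv
  have huv0 := congrArg (fun f => f 0) huv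
  have huv1 := congrArg (fun f => f 1) huv
  simp only [PiLp.smul_apply, vsub_eq_sub, PiLp.sub_apply, smul_eq_mul] at huv0 huv1
  have key : u * ((C 1 - M 1) * (B 0 - A 0) - (C 0 - M 0) * (B 1 - A 1))
      = -(v * ((F 1 - M 1) * (B 0 - A 0) - (F 0 - M 0) * (B 1 - A 1))) := by
    linear_combination (B 0 - A 0)*huv1 - (B 1 - A 1)*huv0 + u*yp₁ + v*yp₂
  have hoppM : ((C 1 - M 1) * (B 0 - A 0) - (C 0 - M 0) * (B 1 - A 1))
      * ((F 1 - M 1) * (B 0 - A 0) - (F 0 - M 0) * (B 1 - A 1)) < 0 := by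
    set yC := (C 1 - M 1) * (B 0 - A 0) - (C 0 - M 0) * (B 1 - A 1) with hyC
    set yF := (F 1 - M 1) * (B 0 - A 0) - (F 0 - M 0) * (B 1 - A 1) with hyF
    have h2 : u * (yC * yF) = -(v * (yF * yF)) := by linear_combination yF * key
    have hvp : 0 < v * (yF * yF) := mul_pos hv0 (mul_self_pos.2 yFne)
    by_contra hcon
    push_neg at hcon
    have : 0 ≤ u * (yC * yF) := mul_nonneg hu0.le hcon
    linarith
  have hoppy : ((C 1 - ((A 1 + B 1)/2)) * (B 0 - A 0) - (C 0 - ((A 0 + B 0)/2)) * (B 1 - A 1))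
      * ((F 1 - ((A 1 + B 1)/2)) * (B 0 - A 0) - (F 0 - ((A 0 + B 0)/2)) * (B 1 - A 1)) < 0 := by
    rw [← hM0, ← hM1]
    exact hoppM
  have hmain := butterfly_coords (A 0) (A 1) (B 0) (B 1) (C 0) (C 1) (D 0) (D 1) (E 0) (E 1)
    (F 0) (F 1) (G 0) (G 1) (H 0) (H 1) (O 0) (O 1) r dA dB dC dD dE dF hab colCD colEF
    colCFG colABG colDEH colABH hCD' hEF' hoppy
  exact midpoint_of_coords (by rw [hM0]; linarith [hmain.1]) (by rw [hM1]; linarith [hmain.2])
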